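/- Let M > 1 and n ≥ 1 a natural number, and set v = 0. Define αₛ = 2/(1 + √(1 − 2M + 2M²)) and βₛ = 2/(1 + 2M − √(2M² − 2M + 1)). Then αₛ ∈ [1/M, 1), βₛ ∈ (αₛ/M, (M+1)/(2M)), αₛ satisfies the cubic equation (M−1)Mn·αₛ³ − (M+1)(M−2)n·αₛ² − 4n·αₛ + 2n = 0, and βₛ satisfies q(βₛ) = 0, where q is the quadratic in β with parameters (M, n, v=0, α=αₛ) given by q(β) = Mn((M−1)²n)((M−1)αₛ + (M+1))β² + 2M[−2(M−1)Mn²·αₛ² − (M+1)n²(3−M)αₛ + n(n − (M−4)Mn)]β + [2M(M²−1)n²·αₛ² + 2(2+M+2M²−M³)n²·αₛ − 2(M+1)²n²]. -/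

import Mathlib

/-- The cubic `h(α)` from the two-step stochastic stepsize schedule analysis. -/
noncomputable def hcub (M n v α : ℝ) : ℝ :=
  (M - 1) * M * n * α ^ 3 - (M + 1) * (M - 2) * n * α ^ 2
    - (4 * n + (M - 1) * (n - 1) * v) * α + 2 * n

/-- The quadratic `q(β)` (in `β`, with parameters `M, n, v, α`) from the
two-step stochastic stepsize schedule analysis. -/
noncomputable def qquad (M n v α β : ℝ) : ℝ :=
  M * n * ((M - 1) ^ 2 * n + (M + 1) ^ 2 * (n - 1) * v) * ((M - 1) * α + (M + 1)) * β ^ 2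
  + 2 * M * (2 * (M - 1) * M * n * ((n - 1) * v - n) * α ^ 2
      + (M + 1) * ((n - 1) * v - n) * ((3 - M) * n + (M - 1) * (n - 1) * v) * α
      + n * (n - (M - 4) * M * n - (M + 1) * (M + 3) * (n - 1) * v)) * β
  + (-2 * M * (M ^ 2 - 1) * n * ((n - 1) * v - n) * α ^ 2
      + (2 * (2 + M + 2 * M ^ 2 - M ^ 3) * n ^ 2 + (M - 3) * (M + 1) ^ 2 * (n - 1) * n * v
          - (M - 1) * (M + 1) ^ 2 * (n - 1) ^ 2 * v ^ 2) * α
      + 2 * (M + 1) ^ 2 * n * ((n - 1) * v - n))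

theorem stmt_2 (M : ℝ) (n : ℕ) (hM : 1 < M) (hn : 1 ≤ n) :
    let αs : ℝ := 2 / (1 + Real.sqrt (1 - 2 * M + 2 * M ^ 2))
    let βs : ℝ := 2 / (1 + 2 * M - Real.sqrt (2 * M ^ 2 - 2 * M + 1))
    αs ∈ Set.Ico (1 / M) 1 ∧
    βs ∈ Set.Ioo (αs / M) ((M + 1) / (2 * M)) ∧
    hcub M (n : ℝ) 0 αs = 0 ∧
    qquad M (n : ℝ) 0 αs βs = 0 := by
  intro αs βs
  have harg : 1 - 2 * M + 2 * M ^ 2 = 2 * M ^ 2 - 2 * M + 1 := by ring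
  set s : ℝ := Real.sqrt (2 * M ^ 2 - 2 * M + 1) with hsdef
  have hpos : (0:ℝ) < 2 * M ^ 2 - 2 * M + 1 := by nlinarith
  have hs0 : 0 ≤ s := Real.sqrt_nonneg _
  have hs2 : s ^ 2 = 2 * M ^ 2 - 2 * M + 1 := Real.sq_sqrt hpos.le
  have hs1 : 1 < s := by nlinarith
  have hsu : s < 2 * M - 1 := by nlinarith
  have hM0 : (0:ℝ) < M := by linarith
  have h1p : (0:ℝ) < 1 + s := by linarith
  have h2p : (0:ℝ) < 1 + 2 * M - s := by linarith
  have hα : αs = 2 / (1 + s) := by simp only [αs, harg, hsdef]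
  have hβ : βs = 2 / (1 + 2 * M - s) := rfl
  have hnp : (0:ℝ) < (n:ℝ) := by exact_mod_cast Nat.pos_of_ne_zero (by omega)
  refine ⟨⟨?_, ?_⟩, ⟨?_, ?_⟩, ?_, ?_⟩
  · rw [hα, div_le_div_iff₀ hM0 h1p]; nlinarith
  · rw [hα, div_lt_one h1p]; linarith
  · rw [hα, hβ, div_div, div_lt_div_iff₀ (by positivity) h2p]; nlinarith
  · rw [hβ, div_lt_div_iff₀ h2p (by positivity)]
    have hA : (0:ℝ) < 2 * M ^ 2 - M + 1 + (M + 1) * s := by nlinarith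
    nlinarith [hs2, hA, mul_pos hM0 (pow_pos (show (0:ℝ) < M - 1 by linarith) 3)]
  · rw [hα]
    unfold hcub
    have h1 : (1:ℝ) + s ≠ 0 := ne_of_gt h1p
    field_simp
    linear_combination ((-2)*(n:ℝ) + (2)*(n:ℝ)*s) * hs2
  · rw [hα, hβ]
    unfold qquad
    have h1 : (1:ℝ) + s ≠ 0 := ne_of_gt h1p
    have h2 : (1:ℝ) + 2 * M - s ≠ 0 := ne_of_gt h2p
    have h2' : (1:ℝ) + M * 2 - s ≠ 0 := ne_of_gt (by linarith)
    field_simp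
    linear_combination ((-6)*(n:ℝ)^2 + (8)*(n:ℝ)^2*s + (-2)*(n:ℝ)^2*s^2 + (-4)*M*(n:ℝ)^2 + (8)*M*(n:ℝ)^2*s + (-4)*M*(n:ℝ)^2*s^2 + (-6)*M^2*(n:ℝ)^2 + (8)*M^2*(n:ℝ)^2*s + (-2)*M^2*(n:ℝ)^2*s^2 + (-8)*M^3*(n:ℝ)^2 + (8)*M^3*(n:ℝ)^2*s) * hs2
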